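/- The map c_{φ,S}(X₁,X₂) = inf{c > 0 : ∫_{Ω/Λ} φ(d_S(ι_{X₁}(x), ι_{X₂}(x))/c) dμ(x) < ∞} is a pseudo-metric (allowing value +∞) on the set of fundamental domains of a smooth measure-preserving action of a finitely generated group Λ on (Ω,μ), where φ : ℝ≥0 → ℝ≥0 is non-decreasing. In particular it satisfies the triangle inequality c_{φ,S}(X₁,X₃) ≤ c_{φ,S}(X₁,X₂) + c_{φ,S}(X₂,X₃). -/

import Mathlib

open MeasureTheory

/-- The Schreier graph metric on `Λ`-orbits induced by a finite symmetric generating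
set `S`. -/
noncomputable def schreierDist {Λ : Type*} [Group Λ] {Ω : Type*} [MulAction Λ Ω]
    (S : Finset Λ) (x y : Ω) : ℕ :=
  sInf {n : ℕ | ∃ l : List Λ, l.length = n ∧ (∀ u ∈ l, u ∈ S ∨ u⁻¹ ∈ S) ∧ l.prod • x = y}

open Pointwise

namespace CphiAux

variable {Λ : Type*} [Group Λ] {Ω : Type*} [MulAction Λ Ω]

def wordSet (S : Finset Λ) (x y : Ω) : Set ℕ :=
  {n : ℕ | ∃ l : List Λ, l.length = n ∧ (∀ u ∈ l, u ∈ S ∨ u⁻¹ ∈ S) ∧ l.prod • x = y}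

lemma schreierDist_eq (S : Finset Λ) (x y : Ω) :
    schreierDist S x y = sInf (wordSet S x y) := rfl

lemma wordSet_nonempty {S : Finset Λ} (hSgen : Subgroup.closure (S : Set Λ) = ⊤)
    {x y : Ω} (h : y ∈ MulAction.orbit Λ x) : (wordSet S x y).Nonempty := by
  obtain ⟨γ, rfl⟩ := h
  have hγ : (γ : Λ) ∈ Submonoid.closure ((S : Set Λ) ∪ (S : Set Λ)⁻¹) := by
    rw [← Subgroup.closure_toSubmonoid]
    have : γ ∈ Subgroup.closure (S : Set Λ) := by rw [hSgen]; trivial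
    exact this
  obtain ⟨l, hl, hprod⟩ := Submonoid.exists_list_of_mem_closure hγ
  refine ⟨l.length, l, rfl, fun u hu => ?_, ?_⟩
  · rcases hl u hu with h | h
    · exact Or.inl h
    · exact Or.inr (Set.mem_inv.mp h)
  · simp [hprod]

lemma schreierDist_triangle {S : Finset Λ} {x y z : Ω}
    (hxy : (wordSet S x y).Nonempty) (hyz : (wordSet S y z).Nonempty) :
    schreierDist S x z ≤ schreierDist S x y + schreierDist S y z := by
  have hm₁ : schreierDist S x y ∈ wordSet S x y := by
    rw [schreierDist_eq]; exact Nat.sInf_mem hxy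
  have hm₂ : schreierDist S y z ∈ wordSet S y z := by
    rw [schreierDist_eq]; exact Nat.sInf_mem hyz
  obtain ⟨l₁, hlen₁, hS₁, hp₁⟩ := hm₁
  obtain ⟨l₂, hlen₂, hS₂, hp₂⟩ := hm₂
  rw [schreierDist_eq]
  refine Nat.sInf_le ⟨l₂ ++ l₁, ?_, ?_, ?_⟩
  · rw [List.length_append, hlen₁, hlen₂, Nat.add_comm]
  · intro u hu
    rcases List.mem_append.mp hu with h | h
    exacts [hS₂ u h, hS₁ u h]
  · rw [List.prod_append, mul_smul, hp₁, hp₂]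

lemma div_add_le_max (a b : NNReal) {c₁ c₂ : NNReal} (hc₁ : 0 < c₁) (hc₂ : 0 < c₂) :
    (a + b) / (c₁ + c₂) ≤ max (a / c₁) (b / c₂) := by
  rw [div_le_iff₀ (by positivity : (0:NNReal) < c₁ + c₂)]
  calc a + b = a / c₁ * c₁ + b / c₂ * c₂ := by
        rw [div_mul_cancel₀ _ hc₁.ne', div_mul_cancel₀ _ hc₂.ne']
    _ ≤ max (a / c₁) (b / c₂) * c₁ + max (a / c₁) (b / c₂) * c₂ := by
        gcongr
        exacts [le_max_left _ _, le_max_right _ _]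
    _ = max (a / c₁) (b / c₂) * (c₁ + c₂) := by ring

lemma aemeasurable_iInf' {Ω : Type*} [MeasurableSpace Ω] {μ : Measure Ω}
    {ι : Sort*} [Countable ι] {f : ι → Ω → ENNReal} (hf : ∀ i, AEMeasurable (f i) μ) :
    AEMeasurable (fun ω => ⨅ i, f i ω) μ := by
  refine ⟨fun ω => ⨅ i, (hf i).mk _ ω, Measurable.iInf fun i => (hf i).measurable_mk, ?_⟩
  filter_upwards [ae_all_iff.2 fun i => (hf i).ae_eq_mk] with ω hω
  exact iInf_congr hω

lemma aemeasurable_iInf_mem {Ω : Type*} [MeasurableSpace Ω] {μ : Measure Ω}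
    {B : Set Ω} (hB : NullMeasurableSet B μ) (a : ENNReal) :
    AEMeasurable (fun ω => ⨅ (_ : ω ∈ B), a) μ := by
  classical
  obtain ⟨t, _, htm, hte⟩ := hB.exists_measurable_subset_ae_eq
  refine ⟨t.piecewise (fun _ => a) (fun _ => (⊤ : ENNReal)),
    Measurable.piecewise htm measurable_const measurable_const, ?_⟩
  filter_upwards [hte] with ω hω
  have hω' : (ω ∈ t) = (ω ∈ B) := hω
  by_cases hωB : ω ∈ B
  · have hωt : ω ∈ t := hω' ▸ hωB
    simp [Set.piecewise, hωB, hωt]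
  · have hωt : ω ∉ t := fun h => hωB (hω' ▸ h)
    simp [Set.piecewise, hωB, hωt]

lemma ae_unique_rep {Ω : Type*} [MeasurableSpace Ω] {μ : Measure Ω}
    [MulAction Λ Ω] [Countable Λ]
    (hmp : ∀ γ : Λ, MeasurePreserving (fun ω : Ω => γ • ω) μ μ)
    {X : Set Ω} (h : IsFundamentalDomain Λ X μ) :
    ∀ᵐ ω ∂μ, ∀ x y : Ω, x ∈ X → x ∈ MulAction.orbit Λ ω →
      y ∈ X → y ∈ MulAction.orbit Λ ω → x = y := by
  set N : Set Ω := ⋃ (γ : Λ) (_ : γ ≠ 1), X ∩ (γ • X) with hN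
  have hNnull : μ N = 0 := by
    rw [hN]
    refine measure_iUnion_null fun γ => measure_iUnion_null fun hγ => ?_
    have := h.aedisjoint (show (1:Λ) ≠ γ from fun e => hγ e.symm)
    have h' : AEDisjoint μ X (γ • X) := by simpa [Function.onFun, one_smul] using this
    exact h'
  have hM : ∀ᵐ ω ∂μ, ∀ γ : Λ, γ • ω ∉ N := by
    rw [ae_all_iff]
    intro γ
    exact measure_eq_zero_iff_ae_notMem.1
      ((hmp γ).quasiMeasurePreserving.preimage_null hNnull)
  filter_upwards [hM] with ω hω x y hxX hxorb hyX hyorb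
  obtain ⟨δ, hδ⟩ := hxorb
  obtain ⟨σ, hσ⟩ := hyorb
  simp only at hδ hσ
  by_cases hτ : σ * δ⁻¹ = 1
  · have : σ = δ := by rwa [mul_inv_eq_one] at hτ
    rw [← hδ, ← hσ, this]
  · exfalso
    apply hω δ
    rw [hδ, hN]
    refine Set.mem_iUnion.2 ⟨(σ * δ⁻¹)⁻¹, Set.mem_iUnion.2 ⟨inv_ne_one.mpr hτ, hxX, ?_⟩⟩
    rw [Set.mem_inv_smul_set_iff]
    have : (σ * δ⁻¹) • x = y := by rw [← hδ, ← hσ, mul_smul]; simp [smul_smul]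
    rw [this]; exact hyX

end CphiAux

open CphiAux

/-- For a smooth measure-preserving action of a finitely generated group `Λ` on `(Ω,μ)`,
the quantity `c_{φ,S}(X₁,X₂) = inf{c > 0 : ∫_{Ω/Λ} φ(d_S(ι_{X₁}x, ι_{X₂}x)/c) dμ < ∞}`
is a pseudo-metric (with values in `[0,∞]`) on fundamental domains; in particular it
satisfies the triangle inequality
`c_{φ,S}(X₁,X₃) ≤ c_{φ,S}(X₁,X₂) + c_{φ,S}(X₂,X₃)`.
Here `ι_X ω` denotes the representative of the orbit of `ω` lying in `X`, and the
integral over `Ω/Λ` is realized as an integral over a fundamental domain. -/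
theorem cphi_triangle_inequality
    {Λ : Type*} [Group Λ] [Countable Λ]
    {Ω : Type*} [MeasurableSpace Ω] (μ : Measure Ω) [SigmaFinite μ]
    [MulAction Λ Ω] (hmp : ∀ γ : Λ, MeasurePreserving (fun ω : Ω => γ • ω) μ μ)
    (S : Finset Λ) (hSgen : Subgroup.closure (S : Set Λ) = ⊤)
    (hSsymm : ∀ s ∈ S, s⁻¹ ∈ S)
    (φ : NNReal → NNReal) (hφ : Monotone φ)
    (X₁ X₂ X₃ : Set Ω)
    (h₁ : IsFundamentalDomain Λ X₁ μ)
    (h₂ : IsFundamentalDomain Λ X₂ μ)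
    (h₃ : IsFundamentalDomain Λ X₃ μ)
    (ι₁ ι₂ ι₃ : Ω → Ω)
    (hι₁ : ∀ᵐ ω ∂μ, ι₁ ω ∈ X₁ ∧ ι₁ ω ∈ MulAction.orbit Λ ω)
    (hι₂ : ∀ᵐ ω ∂μ, ι₂ ω ∈ X₂ ∧ ι₂ ω ∈ MulAction.orbit Λ ω)
    (hι₃ : ∀ᵐ ω ∂μ, ι₃ ω ∈ X₃ ∧ ι₃ ω ∈ MulAction.orbit Λ ω) :
    (⨅ c ∈ {c : NNReal | 0 < c ∧
        ∫⁻ ω in X₁, (φ ((schreierDist S ω (ι₃ ω) : NNReal) / c) : ENNReal) ∂μ < ⊤},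
      (c : ENNReal))
    ≤ (⨅ c ∈ {c : NNReal | 0 < c ∧
        ∫⁻ ω in X₁, (φ ((schreierDist S ω (ι₂ ω) : NNReal) / c) : ENNReal) ∂μ < ⊤},
      (c : ENNReal))
      + (⨅ c ∈ {c : NNReal | 0 < c ∧
        ∫⁻ ω in X₂, (φ ((schreierDist S ω (ι₃ ω) : NNReal) / c) : ENNReal) ∂μ < ⊤},
      (c : ENNReal)) := by
  classical
  letI : MeasurableSpace Λ := ⊤
  haveI : MeasurableSMul Λ Ω :=
    { measurable_const_smul := fun γ => (hmp γ).measurable,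
      measurable_smul_const := fun _ => measurable_from_top }
  haveI : SMulInvariantMeasure Λ Ω μ :=
    ⟨fun γ s hs => (hmp γ).measure_preimage hs.nullMeasurableSet⟩
  have hU₂ := ae_unique_rep hmp h₂
  have hU₃ := ae_unique_rep hmp h₃
  -- the key finiteness statement
  have key : ∀ c₁ c₂ : NNReal, 0 < c₁ → 0 < c₂ →
      (∫⁻ ω in X₁, (φ ((schreierDist S ω (ι₂ ω) : NNReal) / c₁) : ENNReal) ∂μ < ⊤) →
      (∫⁻ ω in X₂, (φ ((schreierDist S ω (ι₃ ω) : NNReal) / c₂) : ENNReal) ∂μ < ⊤) →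
      ∫⁻ ω in X₁, (φ ((schreierDist S ω (ι₃ ω) : NNReal) / (c₁ + c₂)) : ENNReal) ∂μ < ⊤ := by
    intro c₁ c₂ hc₁ hc₂ hint₁ hint₂
    set cond : List Λ → Prop := fun l => ∀ u ∈ l, u ∈ S ∨ u⁻¹ ∈ S with hcond
    set G₁₂ : Ω → ENNReal := fun ω => ⨅ (l : List Λ)
        (_ : ω ∈ {ω : Ω | cond l ∧ l.prod • ω ∈ X₂}),
        (φ ((l.length : NNReal) / c₁) : ENNReal) with hG₁₂
    set G₂₃ : Ω → ENNReal := fun ω => ⨅ (p : List Λ × Λ)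
        (_ : ω ∈ {ω : Ω | cond p.1 ∧ p.2 • ω ∈ X₂ ∧ (p.1.prod * p.2) • ω ∈ X₃}),
        (φ ((p.1.length : NNReal) / c₂) : ENNReal) with hG₂₃
    -- a.e. measurability
    have hG₁₂m : AEMeasurable G₁₂ μ := by
      refine aemeasurable_iInf' fun l => aemeasurable_iInf_mem ?_ _
      by_cases hl : cond l
      · have : {ω : Ω | cond l ∧ l.prod • ω ∈ X₂} = (fun ω : Ω => l.prod • ω) ⁻¹' X₂ := by
          ext ω
          simp only [Set.mem_setOf_eq, Set.mem_preimage]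
          exact and_iff_right hl
        rw [this]
        exact h₂.nullMeasurableSet.preimage (hmp l.prod).quasiMeasurePreserving
      · have : {ω : Ω | cond l ∧ l.prod • ω ∈ X₂} = ∅ := by
          ext ω
          simp only [Set.mem_setOf_eq, Set.mem_empty_iff_false, iff_false]
          exact fun h => hl h.1
        rw [this]; exact MeasurableSet.empty.nullMeasurableSet
    have hG₂₃m : AEMeasurable G₂₃ μ := by
      refine aemeasurable_iInf' fun p => aemeasurable_iInf_mem ?_ _
      by_cases hl : cond p.1
      · have : {ω : Ω | cond p.1 ∧ p.2 • ω ∈ X₂ ∧ (p.1.prod * p.2) • ω ∈ X₃}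
            = ((fun ω : Ω => p.2 • ω) ⁻¹' X₂) ∩ ((fun ω : Ω => (p.1.prod * p.2) • ω) ⁻¹' X₃) := by
          ext ω
          simp only [Set.mem_setOf_eq, Set.mem_inter_iff, Set.mem_preimage]
          exact (and_iff_right hl)
        rw [this]
        exact (h₂.nullMeasurableSet.preimage (hmp p.2).quasiMeasurePreserving).inter
          (h₃.nullMeasurableSet.preimage (hmp (p.1.prod * p.2)).quasiMeasurePreserving)
      · have : {ω : Ω | cond p.1 ∧ p.2 • ω ∈ X₂ ∧ (p.1.prod * p.2) • ω ∈ X₃} = ∅ := by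
          ext ω
          simp only [Set.mem_setOf_eq, Set.mem_empty_iff_false, iff_false]
          exact fun h => hl h.1
        rw [this]; exact MeasurableSet.empty.nullMeasurableSet
    -- invariance of G₂₃
    have hGle : ∀ (γ : Λ) (ω : Ω), G₂₃ (γ • ω) ≤ G₂₃ ω := by
      intro γ ω
      refine le_iInf fun p => le_iInf fun hp => ?_
      refine iInf₂_le (i := (p.1, p.2 * γ⁻¹)) ?_
      refine ⟨hp.1, ?_, ?_⟩
      · show (p.2 * γ⁻¹) • (γ • ω) ∈ X₂
        rw [smul_smul, inv_mul_cancel_right]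
        exact hp.2.1
      · show (p.1.prod * (p.2 * γ⁻¹)) • (γ • ω) ∈ X₃
        rw [smul_smul, mul_assoc, inv_mul_cancel_right]
        exact hp.2.2
    have hGsmul : ∀ (γ : Λ) (ω : Ω), G₂₃ (γ • ω) = G₂₃ ω := by
      intro γ ω
      refine le_antisymm (hGle γ ω) ?_
      have := hGle γ⁻¹ (γ • ω)
      rwa [inv_smul_smul] at this
    -- a.e. identification of G₁₂
    have hG₁₂eq : ∀ᵐ ω ∂μ,
        G₁₂ ω = (φ ((schreierDist S ω (ι₂ ω) : NNReal) / c₁) : ENNReal) := by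
      filter_upwards [hι₂, hU₂] with ω h2 hu
      simp only [hG₁₂]
      refine le_antisymm ?_ ?_
      · have hne := wordSet_nonempty hSgen h2.2
        have hmem : schreierDist S ω (ι₂ ω) ∈ wordSet S ω (ι₂ ω) := by
          rw [schreierDist_eq]; exact Nat.sInf_mem hne
        obtain ⟨l, hlen, hlS, hlp⟩ := hmem
        have hle : (⨅ (l : List Λ) (_ : ω ∈ {ω : Ω | cond l ∧ l.prod • ω ∈ X₂}),
            (φ ((l.length : NNReal) / c₁) : ENNReal)) ≤ (φ ((l.length : NNReal) / c₁) : ENNReal) :=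
          iInf₂_le l ⟨hlS, by rw [hlp]; exact h2.1⟩
        rwa [hlen] at hle
      · refine le_iInf fun l => le_iInf fun hl => ?_
        have hx : l.prod • ω = ι₂ ω :=
          hu (l.prod • ω) (ι₂ ω) hl.2 ⟨l.prod, rfl⟩ h2.1 h2.2
        have hd : schreierDist S ω (ι₂ ω) ≤ l.length := by
          rw [schreierDist_eq]
          exact Nat.sInf_le ⟨l, rfl, hl.1, hx⟩
        have hdiv : (schreierDist S ω (ι₂ ω) : NNReal) / c₁ ≤ (l.length : NNReal) / c₁ := by
          have : (schreierDist S ω (ι₂ ω) : NNReal) ≤ (l.length : NNReal) := by exact_mod_cast hd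
          gcongr
        exact_mod_cast hφ hdiv
    -- a.e. identification of G₂₃
    have hG₂₃eq : ∀ᵐ ω ∂μ,
        G₂₃ ω = (φ ((schreierDist S (ι₂ ω) (ι₃ ω) : NNReal) / c₂) : ENNReal) := by
      filter_upwards [hι₂, hι₃, hU₂, hU₃] with ω h2 h3 hu2 hu3
      simp only [hG₂₃]
      have horb : ι₃ ω ∈ MulAction.orbit Λ (ι₂ ω) := by
        obtain ⟨γ, hγ⟩ := h2.2
        have hγ' : γ • ω = ι₂ ω := hγ
        rw [← hγ', MulAction.orbit_smul]; exact h3.2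
      refine le_antisymm ?_ ?_
      · obtain ⟨γ, hγ⟩ := h2.2
        have hγ' : γ • ω = ι₂ ω := hγ
        have hne := wordSet_nonempty hSgen horb
        have hmem : schreierDist S (ι₂ ω) (ι₃ ω) ∈ wordSet S (ι₂ ω) (ι₃ ω) := by
          rw [schreierDist_eq]; exact Nat.sInf_mem hne
        obtain ⟨l, hlen, hlS, hlp⟩ := hmem
        have hle : (⨅ (p : List Λ × Λ)
            (_ : ω ∈ {ω : Ω | cond p.1 ∧ p.2 • ω ∈ X₂ ∧ (p.1.prod * p.2) • ω ∈ X₃}),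
            (φ ((p.1.length : NNReal) / c₂) : ENNReal)) ≤ (φ ((l.length : NNReal) / c₂) : ENNReal) := by
          refine iInf₂_le (l, γ) ⟨hlS, ?_, ?_⟩
          · show γ • ω ∈ X₂
            rw [hγ']; exact h2.1
          · show (l.prod * γ) • ω ∈ X₃
            rw [mul_smul, hγ', hlp]; exact h3.1
        rwa [hlen] at hle
      · refine le_iInf fun p => le_iInf fun hp => ?_
        have e2 : p.2 • ω = ι₂ ω := hu2 _ _ hp.2.1 ⟨p.2, rfl⟩ h2.1 h2.2
        have e3 : (p.1.prod * p.2) • ω = ι₃ ω := hu3 _ _ hp.2.2 ⟨_, rfl⟩ h3.1 h3.2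
        have hx : p.1.prod • (ι₂ ω) = ι₃ ω := by rw [← e2, ← mul_smul, e3]
        have hd : schreierDist S (ι₂ ω) (ι₃ ω) ≤ p.1.length := by
          rw [schreierDist_eq]; exact Nat.sInf_le ⟨p.1, rfl, hp.1, hx⟩
        have hdiv : (schreierDist S (ι₂ ω) (ι₃ ω) : NNReal) / c₂ ≤ (p.1.length : NNReal) / c₂ := by
          have : (schreierDist S (ι₂ ω) (ι₃ ω) : NNReal) ≤ (p.1.length : NNReal) := by
            exact_mod_cast hd
          gcongr
        exact_mod_cast hφ hdiv
    -- pointwise triangle bound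
    have hbound : ∀ᵐ ω ∂μ,
        (φ ((schreierDist S ω (ι₃ ω) : NNReal) / (c₁ + c₂)) : ENNReal) ≤ G₁₂ ω + G₂₃ ω := by
      filter_upwards [hι₂, hι₃, hG₁₂eq, hG₂₃eq] with ω h2 h3 e1 e2
      rw [e1, e2]
      have horb : ι₃ ω ∈ MulAction.orbit Λ (ι₂ ω) := by
        obtain ⟨γ, hγ⟩ := h2.2
        have hγ' : γ • ω = ι₂ ω := hγ
        rw [← hγ', MulAction.orbit_smul]; exact h3.2
      have htri : schreierDist S ω (ι₃ ω) ≤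
          schreierDist S ω (ι₂ ω) + schreierDist S (ι₂ ω) (ι₃ ω) :=
        schreierDist_triangle (wordSet_nonempty hSgen h2.2) (wordSet_nonempty hSgen horb)
      have hdiv : (schreierDist S ω (ι₃ ω) : NNReal) / (c₁ + c₂) ≤
          max ((schreierDist S ω (ι₂ ω) : NNReal) / c₁)
              ((schreierDist S (ι₂ ω) (ι₃ ω) : NNReal) / c₂) := by
        refine le_trans ?_ (div_add_le_max _ _ hc₁ hc₂)
        gcongr
        exact_mod_cast htri
      have hmax := (hφ hdiv).trans_eq hφ.map_max
      have hcoe : (φ ((schreierDist S ω (ι₃ ω) : NNReal) / (c₁ + c₂)) : ENNReal) ≤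
          max (φ ((schreierDist S ω (ι₂ ω) : NNReal) / c₁) : ENNReal)
              (φ ((schreierDist S (ι₂ ω) (ι₃ ω) : NNReal) / c₂) : ENNReal) := by
        exact_mod_cast hmax
      exact hcoe.trans (max_le le_self_add le_add_self)
    calc ∫⁻ ω in X₁, (φ ((schreierDist S ω (ι₃ ω) : NNReal) / (c₁ + c₂)) : ENNReal) ∂μ
        ≤ ∫⁻ ω in X₁, (G₁₂ ω + G₂₃ ω) ∂μ := lintegral_mono_ae (ae_restrict_of_ae hbound)
      _ = (∫⁻ ω in X₁, G₁₂ ω ∂μ) + ∫⁻ ω in X₁, G₂₃ ω ∂μ :=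
          lintegral_add_left' hG₁₂m.restrict _
      _ < ⊤ := by
          refine ENNReal.add_lt_top.2 ⟨?_, ?_⟩
          · rw [lintegral_congr_ae (ae_restrict_of_ae hG₁₂eq)]
            exact hint₁
          · rw [h₁.setLIntegral_eq h₂ G₂₃ hGsmul]
            have hres : ∀ᵐ ω ∂μ.restrict X₂,
                G₂₃ ω = (φ ((schreierDist S ω (ι₃ ω) : NNReal) / c₂) : ENNReal) := by
              filter_upwards [ae_restrict_mem₀ h₂.nullMeasurableSet,
                ae_restrict_of_ae hG₂₃eq, ae_restrict_of_ae hι₂, ae_restrict_of_ae hU₂]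
                with ω hωX e2 h2 hu2
              have hid : ι₂ ω = ω :=
                (hu2 ω (ι₂ ω) hωX (MulAction.mem_orbit_self ω) h2.1 h2.2).symm
              rw [e2, hid]
            rw [lintegral_congr_ae hres]
            exact hint₂
  -- conclude
  have main : (⨅ c ∈ {c : NNReal | 0 < c ∧
        ∫⁻ ω in X₁, (φ ((schreierDist S ω (ι₃ ω) : NNReal) / c) : ENNReal) ∂μ < ⊤},
      (c : ENNReal))
      ≤ ⨅ c₁ ∈ {c : NNReal | 0 < c ∧
        ∫⁻ ω in X₁, (φ ((schreierDist S ω (ι₂ ω) : NNReal) / c) : ENNReal) ∂μ < ⊤},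
        ⨅ c₂ ∈ {c : NNReal | 0 < c ∧
        ∫⁻ ω in X₂, (φ ((schreierDist S ω (ι₃ ω) : NNReal) / c) : ENNReal) ∂μ < ⊤},
        ((c₁ : ENNReal) + (c₂ : ENNReal)) := by
    refine le_iInf₂ fun c₁ hc₁ => le_iInf₂ fun c₂ hc₂ => ?_
    have hmem : (c₁ + c₂) ∈ {c : NNReal | 0 < c ∧
        ∫⁻ ω in X₁, (φ ((schreierDist S ω (ι₃ ω) : NNReal) / c) : ENNReal) ∂μ < ⊤} :=
      ⟨add_pos hc₁.1 hc₂.1, key c₁ c₂ hc₁.1 hc₂.1 hc₁.2 hc₂.2⟩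
    have hfin : (⨅ c ∈ {c : NNReal | 0 < c ∧
        ∫⁻ ω in X₁, (φ ((schreierDist S ω (ι₃ ω) : NNReal) / c) : ENNReal) ∂μ < ⊤},
        (c : ENNReal)) ≤ ((c₁ + c₂ : NNReal) : ENNReal) := iInf₂_le (c₁ + c₂) hmem
    rwa [ENNReal.coe_add] at hfin
  refine main.trans (le_of_eq ?_)
  simp only [ENNReal.iInf_add, ENNReal.add_iInf]
  apply le_antisymm
  · refine le_iInf₂ fun b hb => le_iInf₂ fun i hi => ?_
    exact iInf₂_le_of_le i hi (iInf₂_le_of_le b hb le_rfl)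
  · refine le_iInf₂ fun i hi => le_iInf₂ fun b hb => ?_
    exact iInf₂_le_of_le b hb (iInf₂_le_of_le i hi le_rfl)
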